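/- Let M be a compact Hausdorff space with basepoint x₀, fix 0 < ε < 1/6, and let σ : [0,ε] → M be a stick. Then the restriction of the reparametrization map r to [0,1] × Ω^σM is injective and, moreover, is a homeomorphism onto its image r([0,1] × Ω^σM) ⊆ ΩM (where the image carries the subspace topology from ΩM). -/

import Mathlib

open Set

/-- The based loop space of `M` at `x₀`: continuous maps `[0,1] → M` sending both
endpoints to `x₀`, with the compact-open topology. -/
abbrev OmegaLoop (M : Type*) [TopologicalSpace M] (x₀ : M) : Type _ :=
  {γ : C(unitInterval, M) // γ 0 = x₀ ∧ γ 1 = x₀}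

/-- The subspace `Ω^σ M` of loops following the stick `σ` on `[0,ε]` and its reverse on
`[1-ε,1]`. -/
abbrev StickOmegaLoop (M : Type*) [TopologicalSpace M] (x₀ : M) (ε : ℝ) (σ : ℝ → M) :
    Type _ :=
  {γ : OmegaLoop M x₀ // ∀ t : unitInterval,
    ((t : ℝ) ≤ ε → γ.1 t = σ t) ∧ (1 - ε ≤ (t : ℝ) → γ.1 t = σ (1 - (t : ℝ)))}

/-- Inverse reparametrization time: for `s ∈ [0,1]`, `u ∈ [ε,1-ε]`, this equals `u/(2s)`
when `u ≤ s` and `1/2 + (u-s)/(2(1-s))` when `s ≤ u`, written so as to be globally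
continuous. -/
noncomputable def stickTheta (ε s u : ℝ) : ℝ :=
  1/2 - max 0 (s - u) / (2 * max s (ε/2)) + max 0 (u - s) / (2 * max (1-s) (ε/2))

lemma stickTheta_continuous {ε : ℝ} (hε : 0 < ε) :
    Continuous fun p : ℝ × ℝ => stickTheta ε p.1 p.2 := by
  have h1 : ∀ x : ℝ, 2 * max x (ε/2) ≠ 0 := fun x =>
    ne_of_gt (by have := le_max_right x (ε/2); positivity)
  apply Continuous.add
  · apply Continuous.sub continuous_const
    exact Continuous.div (by fun_prop) (by fun_prop) fun p => h1 _
  · exact Continuous.div (by fun_prop) (by fun_prop) fun p => h1 _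

lemma stickTheta_left {ε s u : ℝ} (hε : 0 < ε) (hu : ε ≤ u) (h : u ≤ s) :
    stickTheta ε s u = u / (2*s) := by
  have hs : 0 < s := lt_of_lt_of_le hε (hu.trans h)
  rw [stickTheta, max_eq_left (by linarith : u - s ≤ 0),
    max_eq_right (by linarith : (0:ℝ) ≤ s - u), max_eq_left (by linarith : ε/2 ≤ s), zero_div,
    add_zero]
  field_simp
  ring

lemma stickTheta_right {ε s u : ℝ} (hε : 0 < ε) (h : s ≤ u) (hu : u ≤ 1 - ε) :
    stickTheta ε s u = 1/2 + (u - s)/(2*(1-s)) := by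
  have hs : s < 1 := by linarith
  rw [stickTheta, max_eq_left (by linarith : s - u ≤ 0),
    max_eq_right (by linarith : (0:ℝ) ≤ u - s), max_eq_left (by linarith : ε/2 ≤ 1 - s),
    zero_div, sub_zero]

/-- Let `M` be compact Hausdorff with basepoint `x₀`, `0 < ε < 1/6`, and
let `σ` be a stick.  The restriction of the reparametrization map
`r : [0,1] × ΩM → ΩM`, `r(s,γ)(t) = γ(2st)` for `t ≤ 1/2` and
`r(s,γ)(t) = γ(2(1-s)t - 1 + 2s)` for `t ≥ 1/2`, to `[0,1] × Ω^σM` is injective and is a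
homeomorphism onto its image (i.e. a topological embedding into `ΩM`). -/
theorem reparametrization_embedding_on_stick_loops
    {M : Type*} [TopologicalSpace M] [CompactSpace M] [T2Space M]
    (x₀ : M) (ε : ℝ) (hε0 : 0 < ε) (hε : ε < 1/6)
    (σ : ℝ → M) (hσcont : ContinuousOn σ (Icc 0 ε)) (hσinj : InjOn σ (Icc 0 ε))
    (hσ0 : σ 0 = x₀)
    (r : C(unitInterval × OmegaLoop M x₀, OmegaLoop M x₀))
    (hr : ∀ (s : unitInterval) (γ : OmegaLoop M x₀) (t : unitInterval),
      ((t : ℝ) ≤ 1/2 →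
        (r (s, γ)).1 t = γ.1 (projIcc 0 1 zero_le_one (2 * (s : ℝ) * (t : ℝ)))) ∧
      (1/2 ≤ (t : ℝ) →
        (r (s, γ)).1 t =
          γ.1 (projIcc 0 1 zero_le_one (2 * (1 - (s : ℝ)) * (t : ℝ) - 1 + 2 * (s : ℝ))))) :
    Function.Injective
        (fun p : unitInterval × StickOmegaLoop M x₀ ε σ => r (p.1, p.2.1)) ∧
      Topology.IsEmbedding
        (fun p : unitInterval × StickOmegaLoop M x₀ ε σ => r (p.1, p.2.1)) := by
  have hε1 : ε < 1/2 := by linarith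
  -- The stick as a closed embedding, and a Tietze extension `φ` of its inverse.
  set eσ : C(Icc (0:ℝ) ε, M) := ⟨(Icc (0:ℝ) ε).restrict σ, hσcont.restrict⟩ with heσdef
  have heσ : Topology.IsClosedEmbedding eσ :=
    eσ.continuous.isClosedEmbedding fun a b h => Subtype.ext (hσinj a.2 b.2 h)
  obtain ⟨φ, hφ⟩ := ContinuousMap.exists_extension heσ ⟨fun v => (v : ℝ), continuous_subtype_val⟩
  have hφσ : ∀ v : ℝ, ∀ hv : v ∈ Icc (0:ℝ) ε, φ (σ v) = v := fun v hv =>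
    ContinuousMap.congr_fun hφ ⟨v, hv⟩
  -- The continuous "s-recovery" function on the loop space.
  set S : OmegaLoop M x₀ → ℝ :=
    fun δ => φ (δ.1 (projIcc 0 1 zero_le_one (ε/2))) / ε with hSdef
  have hScont : Continuous S := by
    apply Continuous.div_const
    exact φ.continuous.comp
      ((ContinuousEvalConst.continuous_eval_const _).comp continuous_subtype_val)
  have hε2mem : ε/2 ∈ Icc (0:ℝ) 1 := ⟨by linarith, by linarith⟩
  -- S recovers s on reparametrized stick loops.
  have hSval : ∀ (s : unitInterval) (γ' : StickOmegaLoop M x₀ ε σ),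
      S (r (s, γ'.1)) = (s : ℝ) := by
    intro s γ'
    have h12 : ((⟨ε/2, hε2mem⟩ : unitInterval) : ℝ) ≤ 1/2 := by simpa using by linarith
    have heval := (hr s γ'.1 ⟨ε/2, hε2mem⟩).1 h12
    have harg : 2 * (s:ℝ) * ((⟨ε/2, hε2mem⟩ : unitInterval) : ℝ) = (s:ℝ) * ε := by
      simp; ring
    have hmem : (s:ℝ) * ε ∈ Icc (0:ℝ) 1 :=
      ⟨mul_nonneg s.2.1 hε0.le, by nlinarith [s.2.2]⟩
    rw [harg, projIcc_of_mem _ hmem] at heval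
    have hstick := (γ'.2 ⟨(s:ℝ) * ε, hmem⟩).1
      (show (s:ℝ) * ε ≤ ε by nlinarith [s.2.2, hε0.le])
    simp only [hSdef]
    rw [projIcc_of_mem _ hε2mem, heval, hstick,
      hφσ _ ⟨mul_nonneg s.2.1 hε0.le, by nlinarith [s.2.2]⟩]
    field_simp
  -- The key computation: the inverse reparametrization recovers γ on [ε, 1-ε].
  have key : ∀ (s : unitInterval) (γ' : StickOmegaLoop M x₀ ε σ) (u : ℝ)
      (hu : u ∈ Icc ε (1-ε)),
      (r (s, γ'.1)).1 (projIcc 0 1 zero_le_one (stickTheta ε (s:ℝ) u)) =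
        γ'.1.1 ⟨u, ⟨hε0.le.trans hu.1, hu.2.trans (by linarith)⟩⟩ := by
    intro s γ' u hu
    have hu1 := hu.1
    have hu2 := hu.2
    rcases le_total u (s:ℝ) with h | h
    · have hs : 0 < (s:ℝ) := lt_of_lt_of_le hε0 (hu1.trans h)
      have hs' : (s:ℝ) ≠ 0 := ne_of_gt hs
      have hθval : stickTheta ε (s:ℝ) u = u / (2*(s:ℝ)) := stickTheta_left hε0 hu1 h
      have hθmem : stickTheta ε (s:ℝ) u ∈ Icc (0:ℝ) 1 := by
        rw [hθval]
        constructor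
        · exact div_nonneg (by linarith) (by linarith)
        · rw [div_le_one (by linarith)]; linarith
      rw [projIcc_of_mem _ hθmem]
      have h12 : stickTheta ε (s:ℝ) u ≤ 1/2 := by
        rw [hθval, div_le_iff₀ (by linarith)]; linarith
      rw [(hr s γ'.1 ⟨_, hθmem⟩).1 h12]
      have harg : 2 * (s:ℝ) * stickTheta ε (s:ℝ) u = u := by
        rw [hθval]; field_simp
      rw [harg, projIcc_of_mem _ ⟨hε0.le.trans hu.1, hu.2.trans (by linarith)⟩]
    · have hs1 : (s:ℝ) < 1 := by linarith [h.trans hu2]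
      have h1s : 0 < 1 - (s:ℝ) := by linarith
      have h1s' : 1 - (s:ℝ) ≠ 0 := ne_of_gt h1s
      have hθval : stickTheta ε (s:ℝ) u = 1/2 + (u - s)/(2*(1-(s:ℝ))) :=
        stickTheta_right hε0 h hu2
      have hfrac : (u - (s:ℝ))/(2*(1-(s:ℝ))) ≤ 1/2 := by
        rw [div_le_iff₀ (by linarith)]; linarith
      have hfrac0 : (0:ℝ) ≤ (u - s)/(2*(1-(s:ℝ))) := div_nonneg (by linarith) (by linarith)
      have hθmem : stickTheta ε (s:ℝ) u ∈ Icc (0:ℝ) 1 := by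
        rw [hθval]
        exact ⟨by linarith, by linarith⟩
      rw [projIcc_of_mem _ hθmem]
      have h12 : 1/2 ≤ stickTheta ε (s:ℝ) u := by
        rw [hθval]; linarith
      rw [(hr s γ'.1 ⟨_, hθmem⟩).2 h12]
      have harg : 2 * (1 - (s:ℝ)) * stickTheta ε (s:ℝ) u - 1 + 2 * (s:ℝ) = u := by
        rw [hθval]; field_simp; ring
      rw [harg, projIcc_of_mem _ ⟨hε0.le.trans hu.1, hu.2.trans (by linarith)⟩]
  -- Setup of the map and its range.
  set f : unitInterval × StickOmegaLoop M x₀ ε σ → OmegaLoop M x₀ :=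
    fun p => r (p.1, p.2.1) with hfdef
  have hfc : Continuous f :=
    r.continuous.comp (continuous_fst.prodMk (continuous_subtype_val.comp continuous_snd))
  -- The left-inverse loop map `Φ` on (range f) × I.
  set Φfun : ↥(Set.range f) × unitInterval → M := fun q =>
    if (q.2 : ℝ) ≤ ε then σ (min (q.2 : ℝ) ε)
    else if (q.2 : ℝ) ≤ 1 - ε then
      (q.1 : OmegaLoop M x₀).1 (projIcc 0 1 zero_le_one
        (stickTheta ε (S q.1.1) (max ε (min (q.2 : ℝ) (1-ε)))))
    else σ (min (1 - (q.2 : ℝ)) ε) with hΦdef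
  -- value of the middle branch at points of the range
  have hmidval : ∀ (p : unitInterval × StickOmegaLoop M x₀ ε σ) (u : ℝ)
      (hu : u ∈ Icc ε (1-ε)),
      (f p).1 (projIcc 0 1 zero_le_one (stickTheta ε (S (f p)) u)) =
        p.2.1.1 ⟨u, ⟨hε0.le.trans hu.1, hu.2.trans (by linarith)⟩⟩ := by
    intro p u hu
    have : S (f p) = (p.1 : ℝ) := hSval p.1 p.2
    rw [this]
    exact key p.1 p.2 u hu
  have hσmin1 : Continuous fun q : ↥(Set.range f) × unitInterval => σ (min (q.2 : ℝ) ε) := by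
    apply hσcont.comp_continuous (by fun_prop)
    intro q
    exact ⟨le_min q.2.2.1 hε0.le, min_le_right _ _⟩
  have hσmin2 : Continuous fun q : ↥(Set.range f) × unitInterval =>
      σ (min (1 - (q.2 : ℝ)) ε) := by
    apply hσcont.comp_continuous (by fun_prop)
    intro q
    exact ⟨le_min (by linarith [q.2.2.2]) hε0.le, min_le_right _ _⟩
  have hmidc : Continuous fun q : ↥(Set.range f) × unitInterval =>
      (q.1 : OmegaLoop M x₀).1 (projIcc 0 1 zero_le_one
        (stickTheta ε (S q.1.1) (max ε (min (q.2 : ℝ) (1-ε))))) := by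
    have hv : Continuous fun q : ↥(Set.range f) × unitInterval =>
        ((q.1 : OmegaLoop M x₀).1 : C(unitInterval, M)) := by fun_prop
    have h1 : Continuous fun q : ↥(Set.range f) × unitInterval =>
        ((S q.1.1 : ℝ), max ε (min (q.2 : ℝ) (1-ε))) := by
      apply Continuous.prodMk
      · exact hScont.comp (by fun_prop)
      · fun_prop
    have h2 : Continuous fun q : ↥(Set.range f) × unitInterval =>
        projIcc 0 1 zero_le_one (stickTheta ε (S q.1.1) (max ε (min (q.2 : ℝ) (1-ε)))) :=
      continuous_projIcc.comp ((stickTheta_continuous hε0).comp h1)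
    exact ContinuousEval.continuous_eval.comp (hv.prodMk h2)
  have hinnerc : Continuous fun q : ↥(Set.range f) × unitInterval =>
      if (q.2 : ℝ) ≤ 1 - ε then
        (q.1 : OmegaLoop M x₀).1 (projIcc 0 1 zero_le_one
          (stickTheta ε (S q.1.1) (max ε (min (q.2 : ℝ) (1-ε)))))
      else σ (min (1 - (q.2 : ℝ)) ε) := by
    refine Continuous.if_le hmidc hσmin2 (by fun_prop) continuous_const ?_
    intro q hq
    obtain ⟨p, hp⟩ := q.1.2
    rw [hq, min_self, max_eq_right (by linarith : ε ≤ 1 - ε), ← hp,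
      hmidval p (1-ε) ⟨by linarith, le_refl _⟩]
    have hstick := (p.2.2 ⟨1-ε, ⟨by linarith, by linarith⟩⟩).2 (le_refl _)
    rw [hstick]
    rw [min_eq_right (by linarith : ε ≤ 1 - (1 - ε))]
    congr 1
    show (1:ℝ) - (1 - ε) = ε
    ring
  have hΦc : Continuous Φfun := by
    rw [hΦdef]
    refine Continuous.if_le hσmin1 hinnerc (by fun_prop) continuous_const ?_
    intro q hq
    obtain ⟨p, hp⟩ := q.1.2
    rw [hq, if_pos (by linarith : ε ≤ 1 - ε), min_self,
      min_eq_left (by linarith : ε ≤ 1 - ε), max_self, ← hp,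
      hmidval p ε ⟨le_refl _, by linarith⟩]
    exact ((p.2.2 ⟨ε, ⟨hε0.le, by linarith⟩⟩).1 (le_refl _)).symm
  set Φ : C(↥(Set.range f) × unitInterval, M) := ⟨Φfun, hΦc⟩ with hΦdef2
  have hend : ∀ δ : ↥(Set.range f), Φ.curry δ 0 = x₀ ∧ Φ.curry δ 1 = x₀ := by
    intro δ
    constructor
    · show Φfun (δ, 0) = x₀
      simp only [hΦdef, Icc.coe_zero]
      rw [if_pos hε0.le, min_eq_left hε0.le, hσ0]
    · show Φfun (δ, 1) = x₀
      simp only [hΦdef, Icc.coe_one]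
      rw [if_neg (by linarith), if_neg (by linarith)]
      rw [show (1:ℝ) - 1 = 0 by ring, min_eq_left hε0.le, hσ0]
  set g : ↥(Set.range f) → unitInterval × OmegaLoop M x₀ :=
    fun δ => (projIcc 0 1 zero_le_one (S δ.1), ⟨Φ.curry δ, hend δ⟩) with hgdef
  have hgc : Continuous g := by
    apply Continuous.prodMk
    · exact continuous_projIcc.comp (hScont.comp continuous_subtype_val)
    · exact Continuous.subtype_mk Φ.curry.continuous _
  set f' : unitInterval × StickOmegaLoop M x₀ ε σ → ↥(Set.range f) :=
    fun p => ⟨f p, ⟨p, rfl⟩⟩ with hf'def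
  have hf'c : Continuous f' := hfc.subtype_mk _
  have hcomp : g ∘ f' = fun p : unitInterval × StickOmegaLoop M x₀ ε σ =>
      (p.1, (p.2.1 : OmegaLoop M x₀)) := by
    funext p
    obtain ⟨s, γ'⟩ := p
    apply Prod.ext
    · show projIcc 0 1 zero_le_one (S (f (s, γ'))) = s
      have : S (f (s, γ')) = (s:ℝ) := hSval s γ'
      rw [this, projIcc_of_mem _ s.2]
    · apply Subtype.ext
      apply ContinuousMap.ext
      intro t
      show Φfun (f' (s, γ'), t) = γ'.1.1 t
      simp only [hΦdef]
      by_cases h1 : (t : ℝ) ≤ ε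
      · rw [if_pos h1, min_eq_left h1]
        exact ((γ'.2 t).1 h1).symm
      · by_cases h2 : (t : ℝ) ≤ 1 - ε
        · rw [if_neg h1, if_pos h2]
          have hucl : max ε (min (t : ℝ) (1-ε)) = (t : ℝ) := by
            rw [min_eq_left h2, max_eq_right (le_of_not_ge h1)]
          rw [hucl]
          rw [hmidval (s, γ') (t:ℝ) ⟨le_of_not_ge h1, h2⟩]
        · rw [if_neg h1, if_neg h2]
          have h2' : 1 - ε ≤ (t : ℝ) := le_of_not_ge h2
          rw [min_eq_left (by linarith [t.2.2])]
          exact ((γ'.2 t).2 h2').symm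
  have he : Topology.IsEmbedding fun p : unitInterval × StickOmegaLoop M x₀ ε σ =>
      (p.1, (p.2.1 : OmegaLoop M x₀)) :=
    Topology.IsEmbedding.id.prodMap Topology.IsEmbedding.subtypeVal
  have hf'e : Topology.IsEmbedding f' :=
    Topology.IsEmbedding.of_comp hf'c hgc (by rw [hcomp]; exact he)
  have hfe : Topology.IsEmbedding f := by
    have : f = Subtype.val ∘ f' := rfl
    rw [this]
    exact Topology.IsEmbedding.subtypeVal.comp hf'e
  exact ⟨hfe.injective, hfe⟩
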